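/- Let S be a vertex cut of a k-connected graph G and let H be a component of G − S with at least k vertices. Then the set of edges between S and V(H) contains a matching of size k. -/
import Mathlib


open SimpleGraph

/-- The number of edges of `G` both of whose endpoints lie in `S`. -/
noncomputable def edgesWithin {V : Type*} (G : SimpleGraph V) (S : Finset V) : ℕ :=
  {e : Sym2 V | e ∈ G.edgeSet ∧ ∀ v ∈ e, v ∈ S}.ncard

/-- `G` is an `[s,t]`-graph: order at least `s`, and every induced subgraph on
`s` vertices has at least `t` edges. -/
def IsSTGraph {V : Type*} [Fintype V] (G : SimpleGraph V) (s t : ℕ) : Prop :=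
  s ≤ Fintype.card V ∧ ∀ S : Finset V, S.card = s → t ≤ edgesWithin G S

/-- `G` is 2-connected: at least 3 vertices, and deleting any single vertex
leaves a connected graph. -/
def TwoConnected {V : Type*} [Fintype V] (G : SimpleGraph V) : Prop :=
  3 ≤ Fintype.card V ∧ ∀ v : V, (G.induce {w : V | w ≠ v}).Connected

/-- The edge `e` lies on a cycle of length `k` in `G`. -/
def EdgeOnCycle {V : Type*} (G : SimpleGraph V) (e : Sym2 V) (k : ℕ) : Prop :=
  ∃ (u : V) (w : G.Walk u u), w.IsCycle ∧ w.length = k ∧ e ∈ w.edges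

/-- `G` has a cycle of length `k`. -/
def HasCycleLen {V : Type*} (G : SimpleGraph V) (k : ℕ) : Prop :=
  ∃ (u : V) (w : G.Walk u u), w.IsCycle ∧ w.length = k

/-- G is k-connected: more than k vertices, and removing fewer than k vertices
leaves a connected graph. -/
def KConnected {V : Type*} [Fintype V] (G : SimpleGraph V) (k : ℕ) : Prop :=
  k < Fintype.card V ∧
    ∀ T : Finset V, T.card < k → (G.induce ((↑T : Set V)ᶜ)).Connected

/-- If S is a vertex cut of a k-connected graph G and H is a component of G - S
with at least k vertices, then the edges between S and H contain a matching of size k. -/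
theorem stmt_16 {V : Type*} [Fintype V] (G : SimpleGraph V) (k : ℕ)
    (hk : KConnected G k) (S : Finset V)
    (hcut : ¬ (G.induce ((↑S : Set V)ᶜ)).Connected)
    (H : Set V) (hHS : H ⊆ (↑S : Set V)ᶜ)
    (hHconn : (G.induce H).Connected)
    (hHmax : ∀ x ∈ H, ∀ y ∉ H, (y : V) ∉ (↑S : Set V) → ¬ G.Adj x y)
    (hHk : k ≤ H.ncard) :
    ∃ (a b : Fin k → V), Function.Injective a ∧ Function.Injective b ∧
      ∀ i, a i ∈ S ∧ b i ∈ H ∧ G.Adj (a i) (b i) := by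
  classical
  obtain ⟨hkcard, hconn⟩ := hk
  -- |S| ≥ k
  have hSk : k ≤ S.card := by
    by_contra h
    exact hcut (hconn S (lt_of_not_ge h))
  have hHfin : H.Finite := Set.toFinite H
  set T : Finset V := hHfin.toFinset with hTdef
  have hTmem : ∀ v, v ∈ T ↔ v ∈ H := fun v => hHfin.mem_toFinset
  have hTcard : T.card = H.ncard := (Set.ncard_eq_toFinset_card H hHfin).symm
  -- there is a vertex outside S ∪ H
  have hother : ∃ y, y ∉ S ∧ y ∉ H := by
    by_contra h
    push_neg at h
    have hEq : H = (↑S : Set V)ᶜ := by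
      apply Set.Subset.antisymm hHS
      intro y hy
      exact h y hy
    exact hcut (hEq ▸ hHconn)
  -- key covering lemma: any vertex set covering all S-H edges has ≥ k vertices
  have hcover : ∀ C : Finset V, (↑C : Set V) ⊆ ↑S ∪ H →
      (∀ x ∈ H, ∀ z ∈ S, G.Adj x z → x ∈ C ∨ z ∈ C) → k ≤ C.card := by
    intro C hCsub hCcov
    by_contra hlt
    push_neg at hlt
    have conn := hconn C hlt
    -- a vertex of H outside C
    have hHC : ∃ x, x ∈ H ∧ x ∉ C := by
      by_contra h
      push_neg at h
      have : T ⊆ C := fun v hv => h v ((hTmem v).1 hv)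
      have := Finset.card_le_card this
      omega
    obtain ⟨x, hxH, hxC⟩ := hHC
    obtain ⟨y, hyS, hyH⟩ := hother
    have hyC : y ∉ C := by
      intro hy
      rcases hCsub hy with h | h
      · exact hyS h
      · exact hyH h
    -- walk lemma: starting in H, staying in Cᶜ, we stay in H
    have hwalk : ∀ {u v : ↑((↑C : Set V)ᶜ)}
        (_ : (G.induce ((↑C : Set V)ᶜ)).Walk u v), (u : V) ∈ H → (v : V) ∈ H := by
      intro u v w
      induction w with
      | nil => exact id
      | @cons u u' v h p ih =>
        intro hu
        apply ih
        have hadj : G.Adj (u : V) (u' : V) := h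
        by_contra hu'H
        by_cases hu'S : (u' : V) ∈ S
        · rcases hCcov u hu u' hu'S hadj with hc | hc
          · exact u.2 hc
          · exact u'.2 hc
        · exact hHmax u hu u' hu'H hu'S hadj
    have hxc : x ∈ ((↑C : Set V)ᶜ) := hxC
    have hyc : y ∈ ((↑C : Set V)ᶜ) := hyC
    obtain ⟨w⟩ := conn.preconnected ⟨x, hxc⟩ ⟨y, hyc⟩
    exact hyH (hwalk w hxH)
  -- Hall setup with d dummy vertices
  set d : ℕ := S.card - k with hd
  set t : {a : V // a ∈ S} → Finset (V ⊕ Fin d) :=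
    fun a => ((T.filter fun b => G.Adj a.1 b).image Sum.inl) ∪
      (Finset.univ.image Sum.inr) with ht
  have hall : ∀ A : Finset {a : V // a ∈ S}, A.card ≤ (A.biUnion t).card := by
    intro A
    rcases A.eq_empty_or_nonempty with rfl | hAne
    · simp
    set N : Finset V := A.biUnion (fun a => T.filter fun b => G.Adj a.1 b) with hN
    have hsub : N.image Sum.inl ∪ Finset.univ.image Sum.inr ⊆ A.biUnion t := by
      apply Finset.union_subset
      · intro x hx
        simp only [Finset.mem_image, hN, Finset.mem_biUnion] at hx
        obtain ⟨b, ⟨a, haA, hb⟩, rfl⟩ := hx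
        refine Finset.mem_biUnion.2 ⟨a, haA, ?_⟩
        simp only [ht, Finset.mem_union, Finset.mem_image]
        exact Or.inl ⟨b, hb, rfl⟩
      · intro x hx
        obtain ⟨a, haA⟩ := hAne
        refine Finset.mem_biUnion.2 ⟨a, haA, ?_⟩
        simp only [ht, Finset.mem_union]
        exact Or.inr hx
    have hdisj : Disjoint (N.image Sum.inl) ((Finset.univ : Finset (Fin d)).image Sum.inr) := by
      simp [Finset.disjoint_left]
    have hcard : (N.image Sum.inl ∪ (Finset.univ : Finset (Fin d)).image Sum.inr).card = N.card + d := by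
      rw [Finset.card_union_of_disjoint hdisj,
        Finset.card_image_of_injective _ Sum.inl_injective,
        Finset.card_image_of_injective _ Sum.inr_injective]
      simp
    -- the cover C := (S \ A.image val) ∪ N
    set C : Finset V := (S \ A.image Subtype.val) ∪ N with hC
    have hkC : k ≤ C.card := by
      apply hcover
      · intro v hv
        rcases Finset.mem_union.1 hv with h | h
        · exact Or.inl (Finset.mem_sdiff.1 h).1
        · refine Or.inr ?_
          simp only [hN, Finset.mem_biUnion, Finset.mem_filter] at h
          obtain ⟨a, _, hvT, _⟩ := h
          exact (hTmem v).1 hvT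
      · intro x hxH z hzS hadj
        by_cases hz : z ∈ A.image Subtype.val
        · left
          obtain ⟨a, haA, rfl⟩ := Finset.mem_image.1 hz
          refine Finset.mem_union.2 (Or.inr ?_)
          simp only [hN, Finset.mem_biUnion, Finset.mem_filter]
          exact ⟨a, haA, (hTmem x).2 hxH, hadj.symm⟩
        · right
          exact Finset.mem_union.2 (Or.inl (Finset.mem_sdiff.2 ⟨hzS, hz⟩))
    have hAS : A.image Subtype.val ⊆ S := by
      intro v hv
      obtain ⟨a, _, rfl⟩ := Finset.mem_image.1 hv
      exact a.2
    have hAcard : (A.image Subtype.val).card = A.card :=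
      Finset.card_image_of_injective _ Subtype.val_injective
    have hCcard : C.card ≤ (S.card - A.card) + N.card := by
      calc C.card ≤ (S \ A.image Subtype.val).card + N.card := Finset.card_union_le _ _
        _ = (S.card - A.card) + N.card := by rw [Finset.card_sdiff_of_subset hAS, hAcard]
    have hAle : A.card ≤ S.card := by
      have := Finset.card_le_univ A
      simpa [Fintype.card_coe] using this
    have : A.card ≤ N.card + d := by omega
    calc A.card ≤ N.card + d := this
      _ = (N.image Sum.inl ∪ (Finset.univ : Finset (Fin d)).image Sum.inr).card := hcard.symm
      _ ≤ (A.biUnion t).card := Finset.card_le_card hsub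
  obtain ⟨f, hfinj, hfmem⟩ := (Finset.all_card_le_biUnion_card_iff_exists_injective t).1 hall
  -- the elements mapped to real vertices
  set B : Finset {a : V // a ∈ S} := Finset.univ.filter (fun a => (f a).isLeft) with hB
  have hBcard : k ≤ B.card := by
    set B' : Finset {a : V // a ∈ S} := Finset.univ.filter (fun a => (f a).isRight) with hB'
    have hB'le : B'.card ≤ d := by
      have himg : B'.image f ⊆ (Finset.univ : Finset (Fin d)).image Sum.inr := by
        intro x hx
        obtain ⟨a, ha, rfl⟩ := Finset.mem_image.1 hx
        have : (f a).isRight := (Finset.mem_filter.1 ha).2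
        obtain ⟨b, hb⟩ := Sum.isRight_iff.1 this
        rw [hb]
        exact Finset.mem_image.2 ⟨b, Finset.mem_univ b, rfl⟩
      have := Finset.card_le_card himg
      rw [Finset.card_image_of_injective _ hfinj,
        Finset.card_image_of_injective _ Sum.inr_injective] at this
      simpa using this
    have hsplit : B.card + B'.card = S.card := by
      have : B'.card = (Finset.univ.filter (fun a : {a : V // a ∈ S} => ¬ (f a).isLeft)).card := by
        congr 1
        apply Finset.filter_congr
        intro a _
        cases f a <;> simp
      rw [this, Finset.card_filter_add_card_filter_not, Finset.card_univ,
        Fintype.card_coe]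
    omega
  obtain ⟨s, hsB, hscard⟩ := Finset.exists_subset_card_eq hBcard
  have hscard' : Fintype.card ↥s = k := by rw [Fintype.card_coe, hscard]
  set e : ↥s ≃ Fin k := Fintype.equivFinOfCardEq hscard' with he
  set elem : Fin k → {a : V // a ∈ S} := fun i => (e.symm i : ↥s).1 with helem
  have helem_inj : Function.Injective elem :=
    Subtype.val_injective.comp e.symm.injective
  have hL : ∀ i, ∃ y, f (elem i) = Sum.inl y := by
    intro i
    have : elem i ∈ B := hsB (e.symm i).2
    exact Sum.isLeft_iff.1 (Finset.mem_filter.1 this).2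
  set b : Fin k → V := fun i => Classical.choose (hL i) with hb
  have hbspec : ∀ i, f (elem i) = Sum.inl (b i) := fun i => Classical.choose_spec (hL i)
  have hbprop : ∀ i, b i ∈ H ∧ G.Adj (elem i).1 (b i) := by
    intro i
    have := hfmem (elem i)
    rw [hbspec i] at this
    simp only [ht, Finset.mem_union, Finset.mem_image] at this
    rcases this with ⟨v, hv, hveq⟩ | ⟨v, _, hveq⟩
    · obtain ⟨hvT, hvadj⟩ := Finset.mem_filter.1 hv
      have hvb : v = b i := Sum.inl_injective hveq
      exact hvb ▸ ⟨(hTmem v).1 hvT, hvadj⟩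
    · exact absurd hveq (by simp)
  refine ⟨fun i => (elem i).1, b, Subtype.val_injective.comp helem_inj, ?_, ?_⟩
  · intro i j hij
    apply helem_inj
    apply hfinj
    rw [hbspec i, hbspec j, hij]
  · intro i
    exact ⟨(elem i).2, (hbprop i).1, (hbprop i).2⟩
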